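/- Let H be a Hilbert space and L1, L2, L3, L4 closed subspaces. Then L1 ⊥ L2 | L4 and L1 ⊥ L3 | L4 hold simultaneously if and only if L1 ⊥ (L2 ∨ L3) | L4, where L2 ∨ L3 denotes the closed linear span of L2 + L3 (composition/decomposition property of conditional orthogonality). -/

import Mathlib

open scoped InnerProductSpace

/-- Conditional orthogonality: `L1 ⊥ L2 | L3`. -/
def CondOrth {H : Type*} [NormedAddCommGroup H] [InnerProductSpace ℂ H]
    (L1 L2 L3 : Submodule ℂ H) [CompleteSpace L3] : Prop :=
  ∀ x ∈ L1, ∀ y ∈ L2,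
    ⟪x - (L3.orthogonalProjectionOnto x : H), y - (L3.orthogonalProjectionOnto y : H)⟫_ℂ = 0

/-- (De-)Composition property of conditional orthogonality:
`L1 ⊥ L2 | L4` and `L1 ⊥ L3 | L4` hold iff `L1 ⊥ (L2 ∨ L3) | L4`. -/
theorem condOrth_composition {H : Type*} [NormedAddCommGroup H] [InnerProductSpace ℂ H]
    [CompleteSpace H] (L1 L2 L3 L4 : Submodule ℂ H)
    (h1 : IsClosed (L1 : Set H)) (h2 : IsClosed (L2 : Set H))
    (h3 : IsClosed (L3 : Set H)) (h4 : IsClosed (L4 : Set H))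
    [CompleteSpace L4] :
    (CondOrth L1 L2 L4 ∧ CondOrth L1 L3 L4) ↔
      CondOrth L1 ((L2 ⊔ L3).topologicalClosure) L4 := by
  constructor
  · rintro ⟨H2, H3⟩ x hx y hy
    set a : H := x - (L4.orthogonalProjectionOnto x : H) with ha
    let f : H →L[ℂ] ℂ :=
      (innerSL ℂ a).comp
        (ContinuousLinearMap.id ℂ H - L4.subtypeL.comp (L4.orthogonalProjectionOnto))
    have hf : ∀ z : H, f z = ⟪a, z - (L4.orthogonalProjectionOnto z : H)⟫_ℂ := by
      intro z; simp [f, inner_sub_right]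
    have hle : L2 ⊔ L3 ≤ LinearMap.ker (f : H →ₗ[ℂ] ℂ) := by
      refine sup_le ?_ ?_
      · intro z hz
        simp only [LinearMap.mem_ker, ContinuousLinearMap.coe_coe, hf]
        exact H2 x hx z hz
      · intro z hz
        simp only [LinearMap.mem_ker, ContinuousLinearMap.coe_coe, hf]
        exact H3 x hx z hz
    have hclosed : IsClosed ((LinearMap.ker (f : H →ₗ[ℂ] ℂ) : Submodule ℂ H) : Set H) :=
      ContinuousLinearMap.isClosed_ker f
    have := Submodule.topologicalClosure_minimal (L2 ⊔ L3) hle hclosed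
    have hy' := this hy
    have : f y = 0 := hy'
    rw [hf] at this
    exact this
  · intro hcomp
    constructor
    · intro x hx y hy
      exact hcomp x hx y (Submodule.le_topologicalClosure _ (Submodule.mem_sup_left hy))
    · intro x hx y hy
      exact hcomp x hx y (Submodule.le_topologicalClosure _ (Submodule.mem_sup_right hy))
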